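/- Let L be a field of characteristic 0 and n ≥ 1. Define y_i = -x_i - n/2 for 1 ≤ i ≤ n and y_{i+n} = x_{i+n} + n/2 for 1 ≤ i ≤ n in the polynomial ring L[x_1,…,x_{2n}]. Let E : L[x_1,…,x_{2n}]^{S_{2n}} → L[x_1,…,x_{2n}] be the algebra map sending the k-th power sum p_k(x) = Σ_{i=1}^{2n} x_i^k to m_k = Σ_{i=1}^{2n} y_i^k, and let E_a be the algebra map sending p_k to m_k^a = Σ_{i=1}^{n}(y_i - 1)^k + Σ_{i=1}^{n}(y_{i+n} + 1)^k. Then the L-subalgebra of L[x_1,…,x_{2n}] generated by the images of E and E_a contains all polynomials q_j = Σ_{i=1}^n y_i^j and r_j = Σ_{i=1}^n y_{i+n}^j for j ≥ 1; in particular it equals the ring of polynomials invariant under the subgroup S_n × S_n permuting {x_1,…,x_n} and {x_{n+1},…,x_{2n}} separately. -/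

import Mathlib

set_option maxHeartbeats 1000000
set_option synthInstance.maxHeartbeats 200000


open MvPolynomial Finset

section PsumAdjoin
variable {L : Type*} [Field L] [CharZero L] {σ : Type*} [Fintype σ]

lemma esymm_mem_adjoin_psum (k : ℕ) :
    esymm σ L k ∈ Algebra.adjoin L (Set.range (psum σ L)) := by
  induction k using Nat.strong_induction_on with
  | _ k ih =>
    rcases Nat.eq_zero_or_pos k with rfl | hk
    · simpa [esymm_zero] using (Algebra.adjoin L (Set.range (psum σ L))).one_mem
    · have h := mul_esymm_eq_sum σ L k
      have hx : ((-1 : MvPolynomial σ L) ^ (k + 1) *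
          ∑ a ∈ antidiagonal k with a.1 < k, (-1) ^ a.1 * esymm σ L a.1 * psum σ L a.2)
          ∈ Algebra.adjoin L (Set.range (psum σ L)) := by
        apply Subalgebra.mul_mem
        · exact Subalgebra.pow_mem _ (Subalgebra.neg_mem _ (Subalgebra.one_mem _)) _
        · apply Subalgebra.sum_mem
          intro a ha
          simp only [mem_filter, HasAntidiagonal.mem_antidiagonal] at ha
          exact Subalgebra.mul_mem _ (Subalgebra.mul_mem _
            (Subalgebra.pow_mem _ (Subalgebra.neg_mem _ (Subalgebra.one_mem _)) _)
            (ih a.1 (by omega)))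
            (Algebra.subset_adjoin ⟨a.2, rfl⟩)
      rw [← h] at hx
      have hk0 : ((k : L)) ≠ 0 := Nat.cast_ne_zero.mpr (by omega)
      have := (Algebra.adjoin L (Set.range (psum σ L))).smul_mem hx ((k : L))⁻¹
      rwa [show ((k : L))⁻¹ • ((k : MvPolynomial σ L) * esymm σ L k) = esymm σ L k by
        rw [smul_eq_C_mul, show ((k : MvPolynomial σ L)) = C ((k : L)) by push_cast; rfl,
          ← mul_assoc, ← C_mul, inv_mul_cancel₀ hk0, C_1, one_mul]] at this

lemma isSymmetric_mem_adjoin_psum {p : MvPolynomial σ L} (hp : p.IsSymmetric) :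
    p ∈ Algebra.adjoin L (Set.range (psum σ L)) := by
  obtain ⟨g, hg⟩ := esymmAlgHom_surjective (σ := σ) L (n := Fintype.card σ) le_rfl ⟨p, hp⟩
  have hpg : p = aeval (fun i : Fin (Fintype.card σ) ↦ esymm σ L (i + 1)) g := by
    rw [← esymmAlgHom_apply, hg]
  rw [hpg]
  have h1 : aeval (fun i : Fin (Fintype.card σ) ↦ esymm σ L (i + 1)) g ∈
      Algebra.adjoin L (Set.range (fun i : Fin (Fintype.card σ) ↦ esymm σ L (i + 1))) := by
    rw [Algebra.adjoin_range_eq_range_aeval]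
    exact ⟨g, rfl⟩
  refine Algebra.adjoin_le ?_ h1
  rintro x ⟨i, rfl⟩
  exact esymm_mem_adjoin_psum _

end PsumAdjoin

section SumInv
variable (L : Type*) [Field L] [CharZero L] (n : ℕ)

lemma map_psum' {S T : Type*} [CommSemiring S] [CommSemiring T] (f : S →+* T)
    {τ : Type*} [Fintype τ] (k : ℕ) :
    MvPolynomial.map f (psum τ S k) = psum τ T k := by
  simp [psum]

lemma sum_inv_mem_adjoin (p : MvPolynomial (Fin n ⊕ Fin n) L)
    (hp : ∀ π π' : Equiv.Perm (Fin n), rename (Equiv.sumCongr π π') p = p) :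
    p ∈ Algebra.adjoin L
      (Set.range (fun k : ℕ => ∑ i : Fin n, (X (Sum.inl i) : MvPolynomial (Fin n ⊕ Fin n) L) ^ k) ∪
       Set.range (fun k : ℕ => ∑ i : Fin n, (X (Sum.inr i) : MvPolynomial (Fin n ⊕ Fin n) L) ^ k)) := by
  classical
  set R : Type _ := MvPolynomial (Fin n) L with hR
  set Φ := sumAlgEquiv L (Fin n) (Fin n) with hΦ
  set F : MvPolynomial (Fin n) R := Φ p with hF
  have key : ∀ (f g : MvPolynomial (Fin n ⊕ Fin n) L →ₐ[L] MvPolynomial (Fin n) R),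
      (∀ s, f (X s) = g (X s)) → ∀ u, f u = g u := fun f g h u =>
    DFunLike.congr_fun (MvPolynomial.algHom_ext h) u
  -- commuting with inner renames
  have hinner : ∀ (π' : Equiv.Perm (Fin n)) (u : MvPolynomial (Fin n ⊕ Fin n) L),
      Φ (rename (Equiv.sumCongr (Equiv.refl (Fin n)) π') u)
        = mapAlgHom (σ := Fin n) (rename π' : R →ₐ[L] R) (Φ u) := by
    intro π' u
    have := key (Φ.toAlgHom.comp (rename ⇑(Equiv.sumCongr (Equiv.refl (Fin n)) π')))
      ((mapAlgHom (σ := Fin n) (rename π' : R →ₐ[L] R)).comp Φ.toAlgHom)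
      (by rintro (i | i) <;> simp [hΦ, mapAlgHom_apply]) u
    simpa using this
  -- commuting with outer renames
  have houter : ∀ (π : Equiv.Perm (Fin n)) (u : MvPolynomial (Fin n ⊕ Fin n) L),
      Φ (rename (Equiv.sumCongr π (Equiv.refl (Fin n))) u)
        = rename π (Φ u) := by
    intro π u
    have := key (Φ.toAlgHom.comp (rename ⇑(Equiv.sumCongr π (Equiv.refl (Fin n)))))
      (((rename π : MvPolynomial (Fin n) R →ₐ[R] MvPolynomial (Fin n) R).restrictScalars L).comp
        Φ.toAlgHom)
      (by rintro (i | i) <;> simp [hΦ]) u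
    simpa using this
  have hcoeff : ∀ d : Fin n →₀ ℕ, (coeff d F).IsSymmetric := by
    intro d π'
    have h1 := hinner π' p
    rw [hp _ _, ← hF] at h1
    have h2 : coeff d (mapAlgHom (σ := Fin n) (rename π' : R →ₐ[L] R) F)
        = rename π' (coeff d F) := by
      have h3 : mapAlgHom (σ := Fin n) (rename π' : R →ₐ[L] R) F
          = MvPolynomial.map ((rename ⇑π' : R →ₐ[L] R) : R →+* R) F := rfl
      rw [h3, coeff_map]
      rfl
    rw [← h2, ← h1]
  have hFsym : (F : MvPolynomial (Fin n) R).IsSymmetric := by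
    intro π
    have h1 := houter π p
    rw [hp _ _, ← hF] at h1
    rw [← h1]
  -- descend coefficients to the symmetric subalgebra R₀
  set R₀ : Subalgebra L R := symmetricSubalgebra (Fin n) L with hR₀
  set ι : R₀ →+* R := (Subalgebra.val R₀ : R₀ →ₐ[L] R).toRingHom with hι
  have hι_inj : Function.Injective ι := Subtype.val_injective
  set G : MvPolynomial (Fin n) R₀ :=
    ∑ d ∈ F.support, monomial d (⟨coeff d F, hcoeff d⟩ : R₀) with hG
  have hmapG : MvPolynomial.map ι G = F := by
    rw [hG, map_sum (MvPolynomial.map ι)]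
    simp only [map_monomial]
    exact F.support_sum_monomial_coeff
  have hGsym : (G : MvPolynomial (Fin n) R₀).IsSymmetric := by
    intro π
    apply MvPolynomial.map_injective ι hι_inj
    rw [map_rename, hmapG]
    exact hFsym π
  obtain ⟨g, hg⟩ := esymmAlgHom_surjective (σ := Fin n) (R := R₀) (n := n)
    (by simp) ⟨G, hGsym⟩
  have hGg : G = aeval (fun i : Fin n ↦ esymm (Fin n) R₀ (i + 1)) g := by
    rw [← esymmAlgHom_apply, hg]
  -- the target subalgebra on the F side
  set T : Subalgebra L (MvPolynomial (Fin n) R) := Algebra.adjoin L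
    (Set.range (psum (Fin n) R) ∪ Set.range (fun k : ℕ => C (psum (Fin n) L k))) with hT
  -- C of a symmetric polynomial lies in T
  have hCsym : ∀ s : R, s.IsSymmetric → (C s : MvPolynomial (Fin n) R) ∈ T := by
    intro s hs
    have h1 : s ∈ Algebra.adjoin L (Set.range (psum (Fin n) L)) :=
      isSymmetric_mem_adjoin_psum hs
    set CA : R →ₐ[L] MvPolynomial (Fin n) R :=
      IsScalarTower.toAlgHom L R (MvPolynomial (Fin n) R) with hCA
    have hCAs : ∀ t : R, CA t = C t := fun t => rfl
    have h2 : CA s ∈ (Algebra.adjoin L (Set.range (psum (Fin n) L))).map CA :=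
      Subalgebra.mem_map.mpr ⟨s, h1, rfl⟩
    rw [AlgHom.map_adjoin] at h2
    rw [← hCAs s]
    refine Algebra.adjoin_le ?_ h2
    rintro x ⟨-, ⟨k, rfl⟩, rfl⟩
    exact Algebra.subset_adjoin (Or.inr ⟨k, (hCAs _).symm⟩)
  -- esymm over R lies in T
  have hesymmT : ∀ k : ℕ, esymm (Fin n) R k ∈ T := by
    intro k
    set J : MvPolynomial (Fin n) L →ₐ[L] MvPolynomial (Fin n) R :=
      mapAlgHom (Algebra.ofId L R) with hJ
    have hJr : ∀ u, J u = MvPolynomial.map ((Algebra.ofId L R : L →ₐ[L] R) : L →+* R) u :=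
      fun u => rfl
    have h1 : esymm (Fin n) L k ∈ Algebra.adjoin L (Set.range (psum (Fin n) L)) :=
      esymm_mem_adjoin_psum k
    have h2 : J (esymm (Fin n) L k) ∈ (Algebra.adjoin L (Set.range (psum (Fin n) L))).map J :=
      Subalgebra.mem_map.mpr ⟨_, h1, rfl⟩
    rw [AlgHom.map_adjoin] at h2
    have h3 : J (esymm (Fin n) L k) = esymm (Fin n) R k := by rw [hJr, map_esymm]
    rw [h3] at h2
    refine Algebra.adjoin_le ?_ h2
    rintro x ⟨-, ⟨j, rfl⟩, rfl⟩
    refine Algebra.subset_adjoin (Or.inl ⟨j, ?_⟩)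
    rw [hJr, map_psum']
  -- F lies in T
  have hFT : F ∈ T := by
    rw [← hmapG, hGg]
    clear hGg hg hmapG hGsym hG
    induction g using MvPolynomial.induction_on with
    | C a =>
      rw [aeval_C]
      have : MvPolynomial.map ι (algebraMap R₀ (MvPolynomial (Fin n) R₀) a) = C (ι a) := by
        simp [MvPolynomial.algebraMap_eq]
      rw [this]
      exact hCsym _ a.2
    | add u v hu hv => rw [map_add, map_add]; exact T.add_mem hu hv
    | mul_X u i hu =>
      rw [map_mul, map_mul, aeval_X]
      refine T.mul_mem hu ?_
      have : MvPolynomial.map ι (esymm (Fin n) R₀ (i + 1)) = esymm (Fin n) R (i + 1) :=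
        map_esymm _ _ _ _
      rw [this]
      exact hesymmT _
  -- transfer back through Φ
  have hpF : p = Φ.symm F := by rw [hF, AlgEquiv.symm_apply_apply]
  have h2 : Φ.symm F ∈ T.map (Φ.symm : MvPolynomial (Fin n) R ≃ₐ[L] _).toAlgHom :=
    Subalgebra.mem_map.mpr ⟨F, hFT, rfl⟩
  rw [hT, AlgHom.map_adjoin] at h2
  rw [hpF]
  refine Algebra.adjoin_le ?_ h2
  rintro x ⟨-, (⟨k, rfl⟩ | ⟨k, rfl⟩), rfl⟩
  · refine Algebra.subset_adjoin (Or.inl ⟨k, ?_⟩)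
    apply Φ.injective
    rw [AlgEquiv.toAlgHom_eq_coe, AlgEquiv.coe_toAlgHom, AlgEquiv.apply_symm_apply]
    rw [map_sum]
    simp only [map_pow]
    simp [hΦ, psum]
  · refine Algebra.subset_adjoin (Or.inr ⟨k, ?_⟩)
    apply Φ.injective
    rw [AlgEquiv.toAlgHom_eq_coe, AlgEquiv.coe_toAlgHom, AlgEquiv.apply_symm_apply]
    rw [map_sum]
    simp only [map_pow]
    simp only [hΦ, sumAlgEquiv_X_inr, ← C_pow]
    rw [psum, map_sum C]

end SumInv


section Main

/-- Let `L` be a field of characteristic 0 and `n ≥ 1`. With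
`y_i = -x_i - n/2` (`i ≤ n`), `y_{i+n} = x_{i+n} + n/2` in `L[x_1,…,x_{2n}]`, let
`E` (resp. `E_a`) be the algebra map on the ring of symmetric polynomials sending the
power sum `p_k = Σ_{i=1}^{2n} x_i^k` to `m_k = Σ y_i^k` (resp. to
`m_k^a = Σ_{i≤n}(y_i-1)^k + Σ_{i≤n}(y_{i+n}+1)^k`). Then the `L`-subalgebra generated
by the images of `E` and `E_a` contains all `q_j = Σ_{i≤n} y_i^j` and
`r_j = Σ_{i≤n} y_{i+n}^j` for `j ≥ 1`, and it equals the ring of polynomials invariant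
under the subgroup `S_n × S_n` of permutations preserving `{x_1,…,x_n}`. -/
theorem stmt_0 (L : Type*) [Field L] [CharZero L] (n : ℕ) (hn : 1 ≤ n)
    (y : Fin (2 * n) → MvPolynomial (Fin (2 * n)) L)
    (hy : ∀ i, y i = if (i : ℕ) < n then -X i - C ((n : L) / 2) else X i + C ((n : L) / 2))
    (m mA q r : ℕ → MvPolynomial (Fin (2 * n)) L)
    (hm : ∀ k, m k = ∑ i, (y i) ^ k)
    (hmA : ∀ k, mA k = ∑ i ∈ univ.filter (fun i : Fin (2 * n) => (i : ℕ) < n), (y i - 1) ^ k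
      + ∑ i ∈ univ.filter (fun i : Fin (2 * n) => ¬ (i : ℕ) < n), (y i + 1) ^ k)
    (hq : ∀ j, q j = ∑ i ∈ univ.filter (fun i : Fin (2 * n) => (i : ℕ) < n), (y i) ^ j)
    (hr : ∀ j, r j = ∑ i ∈ univ.filter (fun i : Fin (2 * n) => ¬ (i : ℕ) < n), (y i) ^ j)
    (E Ea : MvPolynomial (Fin (2 * n)) L →ₐ[L] MvPolynomial (Fin (2 * n)) L)
    (hE : ∀ k, E (∑ i, (X i : MvPolynomial (Fin (2 * n)) L) ^ k) = m k)
    (hEa : ∀ k, Ea (∑ i, (X i : MvPolynomial (Fin (2 * n)) L) ^ k) = mA k)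
    (A : Subalgebra L (MvPolynomial (Fin (2 * n)) L))
    (hA : A = Algebra.adjoin L
      ((E '' (symmetricSubalgebra (Fin (2 * n)) L : Set (MvPolynomial (Fin (2 * n)) L))) ∪
       (Ea '' (symmetricSubalgebra (Fin (2 * n)) L : Set (MvPolynomial (Fin (2 * n)) L))))) :
    (∀ j : ℕ, 1 ≤ j → q j ∈ A ∧ r j ∈ A) ∧
    (A : Set (MvPolynomial (Fin (2 * n)) L)) =
      {p | ∀ σ : Equiv.Perm (Fin (2 * n)),
        (∀ i : Fin (2 * n), ((i : ℕ) < n ↔ ((σ i : ℕ) < n))) → rename σ p = p} := by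
  classical
  have hps : ∀ k, psum (Fin (2 * n)) L k = ∑ i, (X i : MvPolynomial (Fin (2 * n)) L) ^ k :=
    fun k => rfl
  -- m k and mA k belong to A
  have hm_mem : ∀ k, m k ∈ A := by
    intro k
    rw [hA]
    exact Algebra.subset_adjoin (Or.inl ⟨psum (Fin (2 * n)) L k,
      (mem_symmetricSubalgebra _).mpr (psum_isSymmetric _ _ k), by rw [hps]; exact hE k⟩)
  have hmA_mem : ∀ k, mA k ∈ A := by
    intro k
    rw [hA]
    exact Algebra.subset_adjoin (Or.inr ⟨psum (Fin (2 * n)) L k,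
      (mem_symmetricSubalgebra _).mpr (psum_isSymmetric _ _ k), by rw [hps]; exact hEa k⟩)
  -- A is contained in the adjoin of the m's and mA's
  have hA_le : A ≤ Algebra.adjoin L (Set.range m ∪ Set.range mA) := by
    rw [hA]
    apply Algebra.adjoin_le
    rintro x (⟨p, hp, rfl⟩ | ⟨p, hp, rfl⟩)
    · have h1 : p ∈ Algebra.adjoin L (Set.range (psum (Fin (2 * n)) L)) :=
        isSymmetric_mem_adjoin_psum ((mem_symmetricSubalgebra _).mp hp)
      have h2 : E p ∈ (Algebra.adjoin L (Set.range (psum (Fin (2 * n)) L))).map E :=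
        Subalgebra.mem_map.mpr ⟨p, h1, rfl⟩
      rw [AlgHom.map_adjoin] at h2
      refine Algebra.adjoin_le ?_ h2
      rintro t ⟨-, ⟨k, rfl⟩, rfl⟩
      refine Algebra.subset_adjoin (Or.inl ⟨k, ?_⟩)
      rw [hps]; exact (hE k).symm
    · have h1 : p ∈ Algebra.adjoin L (Set.range (psum (Fin (2 * n)) L)) :=
        isSymmetric_mem_adjoin_psum ((mem_symmetricSubalgebra _).mp hp)
      have h2 : Ea p ∈ (Algebra.adjoin L (Set.range (psum (Fin (2 * n)) L))).map Ea :=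
        Subalgebra.mem_map.mpr ⟨p, h1, rfl⟩
      rw [AlgHom.map_adjoin] at h2
      refine Algebra.adjoin_le ?_ h2
      rintro t ⟨-, ⟨k, rfl⟩, rfl⟩
      refine Algebra.subset_adjoin (Or.inr ⟨k, ?_⟩)
      rw [hps]; exact (hEa k).symm
  -- m in terms of q and r
  have hmid : ∀ k, m k = q k + r k := by
    intro k
    rw [hm, hq, hr, ← sum_filter_add_sum_filter_not univ (fun i : Fin (2 * n) => (i : ℕ) < n)]
  -- mA in terms of q and r
  have hmAid : ∀ K : ℕ, mA K = ∑ j ∈ range (K + 1),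
      (q j * ((-1 : MvPolynomial (Fin (2 * n)) L) ^ (K - j) *
        ((K.choose j : ℕ) : MvPolynomial (Fin (2 * n)) L)) +
       r j * ((K.choose j : ℕ) : MvPolynomial (Fin (2 * n)) L)) := by
    intro K
    rw [hmA]
    have h1 : ∑ i ∈ univ.filter (fun i : Fin (2 * n) => (i : ℕ) < n), (y i - 1) ^ K
        = ∑ j ∈ range (K + 1), q j * ((-1 : MvPolynomial (Fin (2 * n)) L) ^ (K - j) *
            ((K.choose j : ℕ) : MvPolynomial (Fin (2 * n)) L)) := by
      have hterm : ∀ i ∈ univ.filter (fun i : Fin (2 * n) => (i : ℕ) < n), (y i - 1) ^ K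
          = ∑ j ∈ range (K + 1), (y i) ^ j * ((-1 : MvPolynomial (Fin (2 * n)) L) ^ (K - j) *
              ((K.choose j : ℕ) : MvPolynomial (Fin (2 * n)) L)) := by
        intro i _
        rw [sub_eq_add_neg, add_pow]
        exact sum_congr rfl fun j _ => by ring
      rw [sum_congr rfl hterm, Finset.sum_comm]
      refine sum_congr rfl fun j _ => ?_
      rw [← sum_mul, ← hq]
    have h2 : ∑ i ∈ univ.filter (fun i : Fin (2 * n) => ¬ (i : ℕ) < n), (y i + 1) ^ K
        = ∑ j ∈ range (K + 1), r j * ((K.choose j : ℕ) : MvPolynomial (Fin (2 * n)) L) := by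
      have hterm : ∀ i ∈ univ.filter (fun i : Fin (2 * n) => ¬ (i : ℕ) < n), (y i + 1) ^ K
          = ∑ j ∈ range (K + 1), (y i) ^ j *
              ((K.choose j : ℕ) : MvPolynomial (Fin (2 * n)) L) := by
        intro i _
        rw [add_pow]
        exact sum_congr rfl fun j _ => by rw [one_pow, mul_one]
      rw [sum_congr rfl hterm, Finset.sum_comm]
      refine sum_congr rfl fun j _ => ?_
      rw [← sum_mul, ← hr]
    rw [h1, h2, ← sum_add_distrib]
  -- the key induction: all q k and r k lie in A
  have hqr : ∀ k : ℕ, q k ∈ A ∧ r k ∈ A := by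
    intro k
    induction k using Nat.strong_induction_on with
    | _ k ih =>
      have h1 : q k + r k ∈ A := by rw [← hmid k]; exact hm_mem k
      have hstep : (r k - q k) * (((k + 1 : ℕ) : MvPolynomial (Fin (2 * n)) L))
          = mA (k + 1) - m (k + 1) - ∑ j ∈ range k,
            (q j * ((-1 : MvPolynomial (Fin (2 * n)) L) ^ (k + 1 - j) *
              (((k + 1).choose j : ℕ) : MvPolynomial (Fin (2 * n)) L)) +
             r j * (((k + 1).choose j : ℕ) : MvPolynomial (Fin (2 * n)) L)) := by
        rw [hmAid (k + 1), sum_range_succ, sum_range_succ, hmid (k + 1)]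
        have e1 : (k + 1) - (k + 1) = 0 := Nat.sub_self _
        have e2 : (k + 1) - k = 1 := by omega
        have e3 : (k + 1).choose (k + 1) = 1 := Nat.choose_self _
        have e4 : (k + 1).choose k = k + 1 := Nat.choose_succ_self_right _
        rw [e1, e2, e3, e4, pow_zero, pow_one, Nat.cast_one]
        push_cast
        ring
      have h3 : (r k - q k) * (((k + 1 : ℕ) : MvPolynomial (Fin (2 * n)) L)) ∈ A := by
        rw [hstep]
        refine A.sub_mem (A.sub_mem (hmA_mem _) (hm_mem _)) (Subalgebra.sum_mem _ fun j hj => ?_)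
        have hjk : j < k := mem_range.mp hj
        exact A.add_mem
          (A.mul_mem (ih j hjk).1 (A.mul_mem
            (A.pow_mem (A.neg_mem A.one_mem) _) (A.natCast_mem _)))
          (A.mul_mem (ih j hjk).2 (A.natCast_mem _))
      have hkne : (((k + 1 : ℕ) : L)) ≠ 0 := Nat.cast_ne_zero.mpr (Nat.succ_ne_zero k)
      have h4 : r k - q k ∈ A := by
        have h5 := A.smul_mem h3 ((((k + 1 : ℕ) : L))⁻¹)
        rwa [show (((k + 1 : ℕ) : L))⁻¹ •
            ((r k - q k) * (((k + 1 : ℕ) : MvPolynomial (Fin (2 * n)) L)))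
            = r k - q k by
          rw [smul_eq_C_mul,
            show (((k + 1 : ℕ)) : MvPolynomial (Fin (2 * n)) L)
              = C (((k + 1 : ℕ) : L)) from (map_natCast C (k + 1)).symm,
            mul_comm (r k - q k), ← mul_assoc, ← C_mul, inv_mul_cancel₀ hkne, C_1, one_mul]]
          at h5
      have h2ne : ((2 : L)) ≠ 0 := two_ne_zero
      constructor
      · have h6 := A.smul_mem (A.sub_mem h1 h4) (((2 : L))⁻¹)
        rwa [show ((2 : L))⁻¹ • ((q k + r k) - (r k - q k)) = q k by
          rw [smul_eq_C_mul, show (q k + r k) - (r k - q k) = C (2 : L) * q k by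
            rw [map_ofNat]; ring]
          rw [← mul_assoc, ← C_mul, inv_mul_cancel₀ h2ne, C_1, one_mul]] at h6
      · have h6 := A.smul_mem (A.add_mem h1 h4) (((2 : L))⁻¹)
        rwa [show ((2 : L))⁻¹ • ((q k + r k) + (r k - q k)) = r k by
          rw [smul_eq_C_mul, show (q k + r k) + (r k - q k) = C (2 : L) * r k by
            rw [map_ofNat]; ring]
          rw [← mul_assoc, ← C_mul, inv_mul_cancel₀ h2ne, C_1, one_mul]] at h6
  refine ⟨fun j _ => hqr j, ?_⟩
  -- rename commutes with y for block-preserving permutations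
  have hyσ : ∀ σ : Equiv.Perm (Fin (2 * n)), (∀ i : Fin (2 * n), ((i : ℕ) < n ↔ ((σ i : ℕ) < n)))
      → ∀ i, rename ⇑σ (y i) = y (σ i) := by
    intro σ hσ i
    rw [hy i, hy (σ i)]
    by_cases h : (i : ℕ) < n
    · rw [if_pos h, if_pos ((hσ i).mp h)]
      simp
    · rw [if_neg h, if_neg (fun hc => h ((hσ i).mpr hc))]
      simp
  -- the invariance subalgebra
  set Inv : Subalgebra L (MvPolynomial (Fin (2 * n)) L) :=
    ⨅ σp : {σp : Equiv.Perm (Fin (2 * n)) //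
        ∀ i : Fin (2 * n), ((i : ℕ) < n ↔ (((σp : Equiv.Perm (Fin (2 * n))) i : ℕ) < n))},
      AlgHom.equalizer (rename ⇑(σp : Equiv.Perm (Fin (2 * n))))
        (AlgHom.id L (MvPolynomial (Fin (2 * n)) L)) with hInv
  have hInvmem : ∀ x, x ∈ Inv ↔ ∀ σ : Equiv.Perm (Fin (2 * n)),
      (∀ i : Fin (2 * n), ((i : ℕ) < n ↔ ((σ i : ℕ) < n))) → rename ⇑σ x = x := by
    intro x
    rw [hInv, Algebra.mem_iInf]
    constructor
    · intro hx σ hσ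
      exact hx ⟨σ, hσ⟩
    · intro hx σp
      exact hx σp.1 σp.2
  -- A ≤ Inv
  have hAInv : A ≤ Inv := by
    refine le_trans hA_le (Algebra.adjoin_le ?_)
    rintro x (⟨k, rfl⟩ | ⟨k, rfl⟩)
    · rw [SetLike.mem_coe, hInvmem]
      intro σ hσ
      rw [hm k, map_sum]
      simp only [map_pow]
      calc ∑ i, (rename ⇑σ (y i)) ^ k = ∑ i, (y (σ i)) ^ k :=
            sum_congr rfl fun i _ => by rw [hyσ σ hσ i]
        _ = ∑ i, (y i) ^ k := Equiv.sum_comp σ fun i => (y i) ^ k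
    · rw [SetLike.mem_coe, hInvmem]
      intro σ hσ
      rw [hmA k, map_add, map_sum, map_sum]
      simp only [map_sub, map_add, map_pow, map_one]
      congr 1
      · refine Finset.sum_equiv σ (fun i => ?_) (fun i _ => by rw [hyσ σ hσ i])
        simp only [mem_filter, mem_univ, true_and]
        exact hσ i
      · refine Finset.sum_equiv σ (fun i => ?_) (fun i _ => by rw [hyσ σ hσ i])
        simp only [mem_filter, mem_univ, true_and]
        exact not_congr (hσ i)
  -- the reverse inclusion
  have hInvA : ∀ x : MvPolynomial (Fin (2 * n)) L, (∀ σ : Equiv.Perm (Fin (2 * n)),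
      (∀ i : Fin (2 * n), ((i : ℕ) < n ↔ ((σ i : ℕ) < n))) → rename ⇑σ x = x) → x ∈ A := by
    intro x hx
    -- the change-of-variables automorphism
    set z : Fin (2 * n) → MvPolynomial (Fin (2 * n)) L :=
      fun i => if (i : ℕ) < n then -X i - C ((n : L) / 2) else X i - C ((n : L) / 2) with hz
    set ψ : MvPolynomial (Fin (2 * n)) L →ₐ[L] MvPolynomial (Fin (2 * n)) L := aeval y with hψ
    set ψ' : MvPolynomial (Fin (2 * n)) L →ₐ[L] MvPolynomial (Fin (2 * n)) L := aeval z with hψ'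
    have key2 : ∀ f g : MvPolynomial (Fin (2 * n)) L →ₐ[L] MvPolynomial (Fin (2 * n)) L,
        (∀ i, f (X i) = g (X i)) → ∀ u, f u = g u := fun f g h u =>
      DFunLike.congr_fun (MvPolynomial.algHom_ext h) u
    have hψψ' : ∀ u, ψ (ψ' u) = u := by
      refine key2 (ψ.comp ψ') (AlgHom.id L _) (fun i => ?_)
      by_cases h : (i : ℕ) < n <;>
        simp [hψ, hψ', hz, hy, h] <;> ring
    have hψ'ψ : ∀ u, ψ' (ψ u) = u := by
      refine key2 (ψ'.comp ψ) (AlgHom.id L _) (fun i => ?_)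
      by_cases h : (i : ℕ) < n <;>
        simp [hψ, hψ', hz, hy, h] <;> ring
    have hψinj : Function.Injective ψ := fun a b hab => by
      rw [← hψ'ψ a, hab, hψ'ψ b]
    set p₀ : MvPolynomial (Fin (2 * n)) L := ψ' x with hp₀
    have hx0 : ψ p₀ = x := hψψ' x
    -- ψ commutes with block-preserving renamings
    have hcommψ : ∀ σ : Equiv.Perm (Fin (2 * n)),
        (∀ i : Fin (2 * n), ((i : ℕ) < n ↔ ((σ i : ℕ) < n))) →
        ∀ u, rename ⇑σ (ψ u) = ψ (rename ⇑σ u) := by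
      intro σ hσ
      refine key2 ((rename ⇑σ).comp ψ) (ψ.comp (rename ⇑σ)) (fun i => ?_)
      simp only [AlgHom.comp_apply, rename_X]
      rw [hψ, aeval_X, aeval_X]
      exact hyσ σ hσ i
    have hp₀inv : ∀ σ : Equiv.Perm (Fin (2 * n)),
        (∀ i : Fin (2 * n), ((i : ℕ) < n ↔ ((σ i : ℕ) < n))) → rename ⇑σ p₀ = p₀ := by
      intro σ hσ
      apply hψinj
      rw [← hcommψ σ hσ, hx0]
      exact hx σ hσ
    -- the sum equivalence
    set e : Fin n ⊕ Fin n ≃ Fin (2 * n) := finSumFinEquiv.trans (finCongr (two_mul n).symm)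
      with he
    have hel : ∀ i : Fin n, ((e (Sum.inl i) : Fin (2 * n)) : ℕ) = (i : ℕ) := by
      intro i; simp [he]
    have her : ∀ i : Fin n, ((e (Sum.inr i) : Fin (2 * n)) : ℕ) = n + (i : ℕ) := by
      intro i; simp [he]; omega
    have hblockL : ∀ s : Fin n ⊕ Fin n, ((e s : ℕ) < n ↔ s.isLeft = true) := by
      rintro (a | b)
      · simp [hel a, a.isLt]
      · simp [her b]
    set p' : MvPolynomial (Fin n ⊕ Fin n) L := rename ⇑e.symm p₀ with hp'
    have hp'inv : ∀ π π' : Equiv.Perm (Fin n), rename ⇑(Equiv.sumCongr π π') p' = p' := by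
      intro π π'
      set σb : Equiv.Perm (Fin (2 * n)) := e.permCongr (Equiv.sumCongr π π') with hσb
      have hσbb : ∀ i : Fin (2 * n), ((i : ℕ) < n ↔ ((σb i : ℕ) < n)) := by
        intro i
        rw [hσb, Equiv.permCongr_apply]
        have h1 : ((i : ℕ) < n) ↔ (e.symm i).isLeft = true := by
          rw [← hblockL (e.symm i), Equiv.apply_symm_apply]
        have h2 : ((Equiv.sumCongr π π') (e.symm i)).isLeft = (e.symm i).isLeft := by
          rcases e.symm i with a | b <;> simp
        rw [h1, hblockL, h2]
      have hfun : (⇑(Equiv.sumCongr π π') ∘ ⇑e.symm) = (⇑e.symm ∘ ⇑σb) := by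
        funext j
        simp [hσb, Equiv.permCongr_apply]
      rw [hp', rename_rename, hfun, ← rename_rename, hp₀inv σb hσbb]
    have hD := sum_inv_mem_adjoin L n p' hp'inv
    have hp₀e : p₀ = rename ⇑e p' := by
      rw [hp', rename_rename, Equiv.self_comp_symm, rename_id, AlgHom.id_apply]
    -- the two filters as images
    have hembL : Function.Injective (fun a : Fin n => e (Sum.inl a)) := fun a b hab =>
      Sum.inl.inj (e.injective hab)
    have hembR : Function.Injective (fun a : Fin n => e (Sum.inr a)) := fun a b hab =>
      Sum.inr.inj (e.injective hab)
    have hfiltL : univ.filter (fun i : Fin (2 * n) => (i : ℕ) < n)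
        = univ.map ⟨fun a : Fin n => e (Sum.inl a), hembL⟩ := by
      ext i
      simp only [mem_filter, mem_univ, true_and, mem_map, Function.Embedding.coeFn_mk]
      constructor
      · intro hi
        rcases hs : e.symm i with a | b
        · exact ⟨a, by rw [← hs, Equiv.apply_symm_apply]⟩
        · exfalso
          have : i = e (Sum.inr b) := by rw [← hs, Equiv.apply_symm_apply]
          rw [this, her b] at hi
          omega
      · rintro ⟨a, rfl⟩
        rw [hel a]
        exact a.isLt
    have hfiltR : univ.filter (fun i : Fin (2 * n) => ¬ (i : ℕ) < n)
        = univ.map ⟨fun a : Fin n => e (Sum.inr a), hembR⟩ := by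
      ext i
      simp only [mem_filter, mem_univ, true_and, mem_map, Function.Embedding.coeFn_mk]
      constructor
      · intro hi
        rcases hs : e.symm i with a | b
        · exfalso
          have : i = e (Sum.inl a) := by rw [← hs, Equiv.apply_symm_apply]
          rw [this, hel a] at hi
          exact hi a.isLt
        · exact ⟨b, by rw [← hs, Equiv.apply_symm_apply]⟩
      · rintro ⟨b, rfl⟩
        rw [her b]
        omega
    -- transfer the adjoin membership
    have hx1 : p₀ ∈ (Algebra.adjoin L
        (Set.range (fun k : ℕ => ∑ i : Fin n,
          (X (Sum.inl i) : MvPolynomial (Fin n ⊕ Fin n) L) ^ k) ∪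
         Set.range (fun k : ℕ => ∑ i : Fin n,
          (X (Sum.inr i) : MvPolynomial (Fin n ⊕ Fin n) L) ^ k))).map
        (rename ⇑e : MvPolynomial (Fin n ⊕ Fin n) L →ₐ[L] MvPolynomial (Fin (2 * n)) L) := by
      rw [hp₀e]
      exact Subalgebra.mem_map.mpr ⟨p', hD, rfl⟩
    rw [AlgHom.map_adjoin] at hx1
    have hx2 : x ∈ (Algebra.adjoin L
        ((rename ⇑e : MvPolynomial (Fin n ⊕ Fin n) L →ₐ[L] MvPolynomial (Fin (2 * n)) L) ''
          (Set.range (fun k : ℕ => ∑ i : Fin n,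
            (X (Sum.inl i) : MvPolynomial (Fin n ⊕ Fin n) L) ^ k) ∪
           Set.range (fun k : ℕ => ∑ i : Fin n,
            (X (Sum.inr i) : MvPolynomial (Fin n ⊕ Fin n) L) ^ k)))).map ψ := by
      rw [← hx0]
      exact Subalgebra.mem_map.mpr ⟨p₀, hx1, rfl⟩
    rw [AlgHom.map_adjoin] at hx2
    refine Algebra.adjoin_le ?_ hx2
    rintro t ⟨-, ⟨-, (⟨k, rfl⟩ | ⟨k, rfl⟩), rfl⟩, rfl⟩
    · have : ψ (rename ⇑e (∑ i : Fin n,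
          (X (Sum.inl i) : MvPolynomial (Fin n ⊕ Fin n) L) ^ k)) = q k := by
        rw [map_sum, map_sum]
        simp only [map_pow, rename_X]
        rw [hq k, hfiltL, Finset.sum_map]
        refine sum_congr rfl fun a _ => ?_
        rw [hψ, aeval_X]
        rfl
      rw [this]
      exact (hqr k).1
    · have : ψ (rename ⇑e (∑ i : Fin n,
          (X (Sum.inr i) : MvPolynomial (Fin n ⊕ Fin n) L) ^ k)) = r k := by
        rw [map_sum, map_sum]
        simp only [map_pow, rename_X]
        rw [hr k, hfiltR, Finset.sum_map]
        refine sum_congr rfl fun a _ => ?_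
        rw [hψ, aeval_X]
        rfl
      rw [this]
      exact (hqr k).2
  apply Set.Subset.antisymm
  · intro x hx σ hσ
    exact (hInvmem x).mp (hAInv hx) σ hσ
  · intro x hx
    exact hInvA x hx

end Main
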